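/- Let X and M be geodesic metric spaces, x ∈ X, p ∈ M, δ₀ > 0, and 0 < η ≤ δ₀/2100. Let g : M → X and f : X → M be maps of distortion at most η with g(p) = x, f(x) = p, and d(g(f(z)), z) ≤ η for all z ∈ X. Assume that every loop in X whose image is contained in some open ball of radius δ₀/30 is null-homotopic in X. Then there is a unique group homomorphism Φ : π₁(M, p) → π₁(X, x) such that Φ([c]) = [c'] whenever c is a loop at p in M and c' is a loop at x in X with d(c'(t), g(c(t))) ≤ δ₀/300 for all t ∈ [0,1]; moreover Φ is surjective. -/

import Mathlib

open Set unitInterval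
open CategoryTheory

attribute [local instance] Path.Homotopic.setoid

/-- A metric space is geodesic if every pair of points is joined by a unit-speed
continuous path defined on `[0, dist p q]`. -/
def IsGeodesicSpace (M : Type*) [MetricSpace M] : Prop :=
  ∀ p q : M, ∃ γ : ℝ → M,
    ContinuousOn γ (Set.Icc 0 (dist p q)) ∧
    γ 0 = p ∧ γ (dist p q) = q ∧
    ∀ s ∈ Set.Icc 0 (dist p q), ∀ t ∈ Set.Icc 0 (dist p q),
      dist (γ s) (γ t) = |s - t|

/-- A map between metric spaces has distortion at most `η`. -/
def DistortionLE {X M : Type*} [MetricSpace X] [MetricSpace M]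
    (f : X → M) (η : ℝ) : Prop :=
  ∀ a b : X, |dist (f a) (f b) - dist a b| ≤ η

/-- Two loops are freely homotopic. -/
def FreelyHomotopic {Z : Type*} [TopologicalSpace Z]
    (c₀ c₁ : C(unitInterval, Z)) : Prop :=
  ∃ H : C(unitInterval × unitInterval, Z),
    (∀ t, H (t, 0) = c₀ t) ∧ (∀ t, H (t, 1) = c₁ t) ∧ (∀ s, H (0, s) = H (1, s))

/-- A loop is null-homotopic if it is freely homotopic to a constant loop. -/
def NullHomotopicLoop {Z : Type*} [TopologicalSpace Z]
    (c : C(unitInterval, Z)) : Prop :=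
  ∃ z : Z, FreelyHomotopic c (ContinuousMap.const unitInterval z)

/-- The class of a loop based at `z` in the fundamental group `π₁(Z, z)`. -/
noncomputable def loopClass {Z : Type*} [TopologicalSpace Z] {z : Z} (c : Path z z) :
    FundamentalGroup Z z :=
  FundamentalGroup.fromPath (X := TopCat.of Z) ⟦c⟧




noncomputable section Aux

variable {Y : Type*} [TopologicalSpace Y]

/-- affine segment in the unit interval -/
def seg (u v : unitInterval) : Path u v where
  toFun t := ⟨(1 - (t:ℝ)) * u + t * v, by
    constructor
    · have := t.2.1; have := t.2.2; have := u.2.1; have := v.2.1; nlinarith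
    · have := t.2.1; have := t.2.2; have := u.2.2; have := v.2.2; nlinarith⟩
  continuous_toFun := by
    apply Continuous.subtype_mk
    fun_prop
  source' := by ext; simp
  target' := by ext; simp

@[simp] lemma seg_coe (u v : unitInterval) (t : unitInterval) :
    (seg u v t : ℝ) = (1 - (t:ℝ)) * u + t * v := rfl

lemma seg_dist (u v t : unitInterval) : |(seg u v t : ℝ) - u| ≤ |(v:ℝ) - u| := by
  have : (seg u v t : ℝ) - u = t * ((v:ℝ) - u) := by simp [seg_coe]; ring
  rw [this, abs_mul]
  have h1 : |(t:ℝ)| ≤ 1 := by rw [abs_of_nonneg t.2.1]; exact t.2.2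
  nlinarith [abs_nonneg ((v:ℝ) - u)]

lemma seg_self (u : unitInterval) (t : unitInterval) : seg u u t = u := by
  ext; simp [seg_coe]; ring

lemma seg_zero_one (t : unitInterval) : seg 0 1 t = t := by
  ext; simp [seg_coe]

/-- master reparametrization lemma: two paths that are both reparametrizations of
a common continuous map, with matching endpoints of the reparametrizations, are homotopic. -/
lemma homotopic_of_reparam {a b : Y} (γ : C(unitInterval, Y)) (P Q : Path a b)
    (ρ₁ ρ₂ : C(unitInterval, unitInterval))
    (h₁ : ∀ t, P t = γ (ρ₁ t)) (h₂ : ∀ t, Q t = γ (ρ₂ t))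
    (e0 : ρ₁ 0 = ρ₂ 0) (e1 : ρ₁ 1 = ρ₂ 1) : P.Homotopic Q := by
  refine ⟨⟨⟨⟨fun q => γ ((seg (ρ₁ q.2) (ρ₂ q.2)) q.1), ?_⟩, ?_, ?_⟩, ?_⟩⟩
  · apply γ.continuous.comp
    apply Continuous.subtype_mk
    have hc1 : Continuous fun q : unitInterval × unitInterval => (ρ₁ q.2 : ℝ) :=
      continuous_subtype_val.comp (ρ₁.continuous.comp continuous_snd)
    have hc2 : Continuous fun q : unitInterval × unitInterval => (ρ₂ q.2 : ℝ) :=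
      continuous_subtype_val.comp (ρ₂.continuous.comp continuous_snd)
    have hc3 : Continuous fun q : unitInterval × unitInterval => (q.1 : ℝ) :=
      continuous_subtype_val.comp continuous_fst
    show Continuous fun q : unitInterval × unitInterval =>
      (1 - (q.1:ℝ)) * (ρ₁ q.2) + (q.1:ℝ) * (ρ₂ q.2)
    fun_prop
  · intro t
    simp only [ContinuousMap.coe_mk]
    rw [show (seg (ρ₁ t) (ρ₂ t)) 0 = ρ₁ t from (seg _ _).source']
    exact (h₁ t).symm
  · intro t
    simp only [ContinuousMap.coe_mk]
    rw [show (seg (ρ₁ t) (ρ₂ t)) 1 = ρ₂ t from (seg _ _).target']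
    exact (h₂ t).symm
  · intro s t ht
    simp only [Set.mem_insert_iff, Set.mem_singleton_iff] at ht
    rcases ht with rfl | rfl
    · simp only [ContinuousMap.coe_mk, ContinuousMap.HomotopyWith.coe_toContinuousMap]
      rw [← e0, seg_self]
      simp [← h₁ 0]
    · simp only [ContinuousMap.coe_mk, ContinuousMap.HomotopyWith.coe_toContinuousMap]
      rw [← e1, seg_self]
      simp [← h₁ 1]

end Aux


noncomputable section Aux2

variable {Z : Type*} [MetricSpace Z]

/-- geodesic as a Path, with control on distance to the source -/
lemma geodPath (hZ : IsGeodesicSpace Z) (a b : Z) :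
    ∃ P : Path a b, ∀ s : unitInterval, dist (P s) a ≤ dist a b := by
  obtain ⟨γ, hcont, h0, hd, hiso⟩ := hZ a b
  have hd0 : (0:ℝ) ≤ dist a b := dist_nonneg
  have hmem : ∀ t : unitInterval, (t:ℝ) * dist a b ∈ Set.Icc 0 (dist a b) := by
    intro t
    constructor
    · exact mul_nonneg t.2.1 hd0
    · nlinarith [t.2.2, t.2.1]
  refine ⟨⟨⟨fun t => γ ((t:ℝ) * dist a b), ?_⟩, ?_, ?_⟩, ?_⟩
  · exact hcont.comp_continuous (by fun_prop) hmem
  · simp only; rw [show ((0:unitInterval):ℝ) * dist a b = 0 by norm_num, h0]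
  · simp only; rw [show ((1:unitInterval):ℝ) * dist a b = dist a b by norm_num, hd]
  · intro s
    show dist (γ ((s:ℝ) * dist a b)) a ≤ dist a b
    have key := hiso _ (hmem s) 0 ⟨le_refl _, hd0⟩
    rw [h0] at key
    rw [key, sub_zero, abs_of_nonneg (mul_nonneg s.2.1 hd0)]
    nlinarith [s.2.2, s.2.1]

/-- uniform continuity modulus -/
lemma unifMod {Y : Type*} [MetricSpace Y] (w : C(unitInterval, Y)) {ε : ℝ} (hε : 0 < ε) :
    ∃ n : ℕ, 1 ≤ n ∧ ∀ s t : unitInterval, |(s:ℝ) - (t:ℝ)| ≤ 1 / n →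
      dist (w s) (w t) ≤ ε := by
  have huc : UniformContinuous w := CompactSpace.uniformContinuous_of_continuous w.continuous
  rw [Metric.uniformContinuous_iff] at huc
  obtain ⟨δ, hδ, hδ'⟩ := huc ε hε
  obtain ⟨n, hn⟩ := exists_nat_one_div_lt hδ
  refine ⟨n + 1, by omega, ?_⟩
  intro s t hst
  have : dist s t < δ := by
    rw [Subtype.dist_eq, Real.dist_eq]
    calc |(s:ℝ) - t| ≤ 1 / (n+1) := by exact_mod_cast hst
    _ < δ := hn
  exact (hδ' this).le

/-- uniform continuity modulus on the square -/
lemma unifMod2 {Y : Type*} [MetricSpace Y] (w : C(unitInterval × unitInterval, Y)) {ε : ℝ}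
    (hε : 0 < ε) :
    ∃ n : ℕ, 1 ≤ n ∧ ∀ s s' t t' : unitInterval, |(s:ℝ) - (s':ℝ)| ≤ 1 / n →
      |(t:ℝ) - (t':ℝ)| ≤ 1 / n → dist (w (s, t)) (w (s', t')) ≤ ε := by
  have huc : UniformContinuous w := CompactSpace.uniformContinuous_of_continuous w.continuous
  rw [Metric.uniformContinuous_iff] at huc
  obtain ⟨δ, hδ, hδ'⟩ := huc ε hε
  obtain ⟨n, hn⟩ := exists_nat_one_div_lt hδ
  refine ⟨n + 1, by omega, ?_⟩
  intro s s' t t' hs ht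
  have : dist (s, t) (s', t') < δ := by
    rw [Prod.dist_eq]
    apply max_lt
    · rw [Subtype.dist_eq, Real.dist_eq]
      calc |(s:ℝ) - s'| ≤ 1 / (n+1) := by exact_mod_cast hs
      _ < δ := hn
    · rw [Subtype.dist_eq, Real.dist_eq]
      calc |(t:ℝ) - t'| ≤ 1 / (n+1) := by exact_mod_cast ht
      _ < δ := hn
  exact (hδ' this).le

lemma exists_subinterval {n : ℕ} (hn : 1 ≤ n) (t : unitInterval) :
    ∃ i : ℕ, i < n ∧ (i:ℝ)/n ≤ t ∧ (t:ℝ) ≤ (i+1)/n := by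
  have hn' : (0:ℝ) < n := by exact_mod_cast hn
  by_cases h1 : (t:ℝ) = 1
  · refine ⟨n - 1, by omega, ?_, ?_⟩
    · rw [h1]
      apply div_le_one_of_le₀ _ hn'.le
      rw [Nat.cast_sub hn]; push_cast; linarith
    · rw [h1, le_div_iff₀ hn', Nat.cast_sub hn]; push_cast; linarith
  · have ht1 : (t:ℝ) < 1 := lt_of_le_of_ne t.2.2 h1
    refine ⟨⌊(n:ℝ) * t⌋₊, ?_, ?_, ?_⟩
    · have : (n:ℝ) * t < n := by nlinarith [t.2.1]
      exact_mod_cast Nat.floor_lt (mul_nonneg (Nat.cast_nonneg n) t.2.1) |>.2 this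
    · rw [div_le_iff₀ hn', mul_comm]
      exact Nat.floor_le (mul_nonneg t.2.1 (Nat.cast_nonneg n))
    · rw [le_div_iff₀ hn', mul_comm]
      push_cast
      exact (Nat.lt_floor_add_one _).le

end Aux2

noncomputable section Aux3

variable {Z : Type*} [MetricSpace Z]

def glue (y : ℕ → Z) (P : ∀ i, Path (y i) (y (i+1))) (n : ℕ) : ℕ → ℝ → Z
  | 0 => fun _ => y 0
  | (k+1) => fun r => if r ≤ (k:ℝ)/n then glue y P n k r else (P k).extend (n*r - k)

variable {y : ℕ → Z} {P : ∀ i, Path (y i) (y (i+1))} {n : ℕ}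

lemma glue_right (hn : 1 ≤ n) (k : ℕ) :
    ∀ r : ℝ, (k:ℝ)/n ≤ r → glue y P n k r = y k := by
  have hn' : (0:ℝ) < n := by exact_mod_cast hn
  induction k with
  | zero => intro r _; rfl
  | succ k ih =>
    intro r hr
    have hkr : ¬ (r ≤ (k:ℝ)/n) := by
      push_neg
      calc (k:ℝ)/n < (k+1)/n := by gcongr; linarith
      _ ≤ r := by exact_mod_cast hr
    show (if r ≤ (k:ℝ)/n then glue y P n k r else (P k).extend (n*r - k)) = y (k+1)
    rw [if_neg hkr]
    apply Path.extend_of_one_le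
    rw [le_sub_iff_add_le]
    have : ((k:ℝ)+1) ≤ n * r := by
      rw [← div_le_iff₀' hn']
      exact_mod_cast hr
    linarith

lemma glue_left (k : ℕ) : ∀ r : ℝ, r ≤ 0 → glue y P n k r = y 0 := by
  induction k with
  | zero => intro r _; rfl
  | succ k ih =>
    intro r hr
    show (if r ≤ (k:ℝ)/n then glue y P n k r else (P k).extend (n*r - k)) = y 0
    rw [if_pos (hr.trans (by positivity))]
    exact ih r hr

lemma glue_cont (hn : 1 ≤ n) (k : ℕ) : Continuous (glue y P n k) := by
  have hn' : (0:ℝ) < n := by exact_mod_cast hn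
  induction k with
  | zero => exact continuous_const
  | succ k ih =>
    show Continuous fun r => if r ≤ (k:ℝ)/n then glue y P n k r else (P k).extend (n*r - k)
    apply Continuous.if_le ih ((P k).continuous_extend.comp (by fun_prop))
      continuous_id continuous_const
    intro r hr
    simp only [id_eq] at hr
    subst hr
    simp only [Function.comp_apply]
    rw [glue_right hn k _ le_rfl, mul_div_cancel₀ _ (ne_of_gt hn'), sub_self, Path.extend_zero]

lemma glue_piece (hn : 1 ≤ n) (k : ℕ) (hP : ∀ i s, dist (P i s) (y i) ≤ dist (y i) (y (i+1))) :
    ∀ i < k, ∀ r : ℝ, (i:ℝ)/n ≤ r → r ≤ ((i:ℝ)+1)/n →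
      dist (glue y P n k r) (y i) ≤ dist (y i) (y (i+1)) := by
  have hn' : (0:ℝ) < n := by exact_mod_cast hn
  induction k with
  | zero => omega
  | succ k ih =>
    intro i hi r h1 h2
    show dist (if r ≤ (k:ℝ)/n then glue y P n k r else (P k).extend (n*r - k)) (y i)
      ≤ dist (y i) (y (i+1))
    rcases Nat.lt_or_ge i k with hik | hik
    · have : r ≤ (k:ℝ)/n := h2.trans (by gcongr; exact_mod_cast hik)
      rw [if_pos this]
      exact ih i hik r h1 h2
    · have hik' : i = k := by omega
      subst hik'
      by_cases hc : r ≤ (i:ℝ)/n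
      · rw [if_pos hc]
        have hr : r = (i:ℝ)/n := le_antisymm hc h1
        rw [glue_right hn i r h1]
        simp [dist_nonneg]
      · rw [if_neg hc]
        push_neg at hc
        have hm : n*r - i ∈ Set.Icc (0:ℝ) 1 := by
          constructor
          · have : (i:ℝ) ≤ n * r := by
              rw [← div_le_iff₀' hn']; exact h1
            linarith
          · have : n * r ≤ (i:ℝ)+1 := by
              rw [← le_div_iff₀' hn']; exact h2
            linarith
        rw [Path.extend_apply _ hm]
        exact hP i _

lemma lemB {Y : Type*} [MetricSpace Y] (hZ : IsGeodesicSpace Z)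
    (h : Y → Z) (η' : ℝ) (hh : ∀ a b, dist (h a) (h b) ≤ dist a b + η')
    {q : Y} (w : Path q q) {ε' : ℝ} (hε' : 0 < ε') :
    ∃ w' : Path (h q) (h q), ∀ t, dist (w' t) (h (w t)) ≤ 2*ε' + 2*η' := by
  obtain ⟨n, hn1, hosc⟩ := unifMod w.toContinuousMap hε'
  have hn' : (0:ℝ) < n := by exact_mod_cast hn1
  set pt : ℕ → unitInterval := fun i => Set.projIcc 0 1 zero_le_one ((i:ℝ)/n) with hpt
  have ptcoe : ∀ j : ℕ, j ≤ n → (pt j : ℝ) = (j:ℝ)/n := by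
    intro j hj
    rw [hpt]
    simp only
    rw [Set.projIcc_of_mem]
    constructor
    · positivity
    · rw [div_le_one hn']; exact_mod_cast hj
  set y : ℕ → Z := fun i => h (w (pt i)) with hy
  have hgeo : ∀ i : ℕ, ∃ Q : Path (y i) (y (i+1)), ∀ s, dist (Q s) (y i) ≤ dist (y i) (y (i+1)) :=
    fun i => geodPath hZ _ _
  choose P hP using hgeo
  have hsrc : glue y P n n 0 = h q := by
    rw [glue_left n 0 le_rfl, hy]
    simp only
    have : pt 0 = 0 := by
      ext; rw [ptcoe 0 (by omega)]; simp
    rw [this, w.source]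
  have htgt : glue y P n n 1 = h q := by
    rw [glue_right hn1 n 1 (by rw [div_self (ne_of_gt hn')])]
    have : pt n = 1 := by
      ext; rw [ptcoe n le_rfl, div_self (ne_of_gt hn')]; simp
    rw [hy]; simp only [this, w.target]
  refine ⟨⟨⟨fun t => glue y P n n t, (glue_cont hn1 n).comp continuous_subtype_val⟩,
    hsrc, htgt⟩, ?_⟩
  intro t
  obtain ⟨i, hi, h1, h2⟩ := exists_subinterval hn1 t
  show dist (glue y P n n t) (h (w t)) ≤ 2*ε' + 2*η'
  have key1 : dist (glue y P n n t) (y i) ≤ dist (y i) (y (i+1)) :=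
    glue_piece hn1 n hP i hi t h1 h2
  have key2 : dist (y i) (y (i+1)) ≤ ε' + η' := by
    rw [hy]
    simp only
    calc dist (h (w (pt i))) (h (w (pt (i+1)))) ≤ dist (w (pt i)) (w (pt (i+1))) + η' := hh _ _
    _ ≤ ε' + η' := by
        gcongr
        apply hosc
        rw [ptcoe i (by omega), ptcoe (i+1) (by omega)]
        push_cast
        rw [div_sub_div_same, abs_div, abs_of_nonneg (by linarith : (0:ℝ) ≤ n)]
        rw [show (i:ℝ) - (i+1) = -1 by ring]
        rw [abs_neg, abs_one]
  have key3 : dist (h (w t)) (y i) ≤ ε' + η' := by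
    rw [hy]
    simp only
    calc dist (h (w t)) (h (w (pt i))) ≤ dist (w t) (w (pt i)) + η' := hh _ _
    _ ≤ ε' + η' := by
        gcongr
        apply hosc
        rw [ptcoe i (by omega)]
        rw [abs_sub_le_iff]
        constructor
        · have h3 : ((i:ℝ)+1)/n = (i:ℝ)/n + 1/n := by ring
          linarith [h2]
        · linarith [h1, (by positivity : (0:ℝ) ≤ 1/n)]
  calc dist (glue y P n n t) (h (w t)) ≤
      dist (glue y P n n t) (y i) + dist (y i) (h (w t)) := dist_triangle _ _ _
  _ ≤ (ε'+η') + (ε'+η') := by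
      rw [dist_comm (y i)]
      exact add_le_add (key1.trans key2) key3
  _ = 2*ε' + 2*η' := by ring

end Aux3


noncomputable section Aux4

variable {X : Type*} [MetricSpace X]

/-- a freely null-homotopic loop is based-homotopic to the constant loop -/
lemma nullHomotopic_based {y : X} (L : Path y y)
    (hnull : NullHomotopicLoop L.toContinuousMap) :
    L.Homotopic (Path.refl y) := by
  obtain ⟨z₀, H, hH0, hH1, hHloop⟩ := hnull
  simp only [ContinuousMap.const_apply] at hH1
  have hc : ∀ t, H (t, 0) = L t := fun t => hH0 t
  set γ : Path y z₀ :=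
    ⟨⟨fun s => H (0, s), H.continuous.comp (by fun_prop)⟩,
      by simp only [ContinuousMap.coe_mk]; rw [hc 0, L.source],
      by simp only [ContinuousMap.coe_mk]; exact hH1 0⟩ with hγ
  have hγap : ∀ s : unitInterval, γ s = H (0, s) := fun s => rfl
  have hγap' : ∀ s : unitInterval, γ s = H (1, s) := fun s => hHloop s ▸ rfl
  -- the homotopy K
  have hden : ∀ s : unitInterval, (0:ℝ) < 1 - 3*(s:ℝ)/4 := by
    intro s; have := s.2.2; linarith
  set θ : unitInterval × unitInterval → ℝ :=
    fun q => ((q.2:ℝ) - (q.1:ℝ)/2) / (1 - 3*(q.1:ℝ)/4) with hθ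
  set K : unitInterval × unitInterval → X := fun q =>
    if (q.2:ℝ) ≤ (q.1:ℝ)/2 then γ.extend (2*(q.2:ℝ))
    else if 1 - (q.1:ℝ)/4 ≤ (q.2:ℝ) then γ.extend (4 - 4*(q.2:ℝ))
    else H (Set.projIcc 0 1 zero_le_one (θ q), q.1) with hK
  have hKcont : Continuous K := by
    rw [hK]
    apply Continuous.if_le
    · fun_prop
    · apply Continuous.if_le
      · fun_prop
      · apply H.continuous.comp
        apply Continuous.prodMk
        · apply continuous_projIcc.comp
          rw [hθ]
          apply Continuous.div (by fun_prop) (by fun_prop)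
          intro q; exact ne_of_gt (hden q.1)
        · exact continuous_fst
      · fun_prop
      · fun_prop
      · -- inner boundary : 1 - s/4 = t
        rintro ⟨s, t⟩ hq
        simp only at hq ⊢
        have hθ1 : θ (s, t) = 1 := by
          rw [hθ]; simp only
          rw [← hq]
          rw [show (1 - (s:ℝ)/4) - s/2 = 1 - 3*s/4 by ring]
          exact div_self (ne_of_gt (hden s))
        have hproj1 : Set.projIcc (0:ℝ) 1 zero_le_one 1 = 1 := by
          ext; simp
        rw [hθ1, hproj1]
        rw [show (4:ℝ) - 4*t = s by rw [← hq]; ring]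
        rw [← hγap' s, Path.extend_apply γ ⟨s.2.1, s.2.2⟩]
    · fun_prop
    · fun_prop
    · -- outer boundary : t = s/2
      rintro ⟨s, t⟩ hq
      simp only at hq ⊢
      have hnot : ¬ (1 - (s:ℝ)/4 ≤ (t:ℝ)) := by
        push_neg
        rw [hq]
        have := s.2.2
        linarith
      rw [if_neg hnot]
      have hθ0 : θ (s, t) = 0 := by
        rw [hθ]; simp only
        rw [hq, sub_self, zero_div]
      have hproj0 : Set.projIcc (0:ℝ) 1 zero_le_one 0 = 0 := by
        ext; simp
      rw [hθ0, hproj0, ← hγap s, show 2*(t:ℝ) = (s:ℝ) by rw [hq]; ring,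
        Path.extend_apply γ ⟨s.2.1, s.2.2⟩]
  have key : L.Homotopic (γ.trans ((Path.refl z₀).trans γ.symm)) := by
    refine ⟨⟨⟨⟨K, hKcont⟩, ?_, ?_⟩, ?_⟩⟩
    · -- s = 0
      intro t
      simp only [ContinuousMap.coe_mk, hK, Path.coe_toContinuousMap]
      rcases le_or_gt (t:ℝ) 0 with h | h
      · have ht : t = 0 := le_antisymm (by exact_mod_cast h) t.2.1 |> fun h' => Subtype.ext (le_antisymm h t.2.1)
        subst ht
        rw [if_pos (by norm_num)]
        simp only [Icc.coe_zero, mul_zero, Path.extend_zero]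
        rw [L.source]
      · rw [if_neg (by push_neg; simpa using h)]
        rcases le_or_gt (1 - (0:ℝ)/4) (t:ℝ) with h2 | h2
        · have ht : t = 1 := by
            apply Subtype.ext
            apply le_antisymm t.2.2
            simpa using h2
          subst ht
          rw [if_pos (by norm_num)]
          simp only [Icc.coe_one]
          rw [show (4:ℝ) - 4*1 = 0 by ring, Path.extend_zero, L.target]
        · rw [if_neg (by push_neg; simpa using h2)]
          have hθt : θ (0, t) = (t:ℝ) := by
            rw [hθ]; simp
          rw [hθt, Set.projIcc_val zero_le_one t]
          exact hc t
    · -- s = 1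
      intro t
      simp only [ContinuousMap.coe_mk, hK, Path.coe_toContinuousMap, Icc.coe_one]
      rw [Path.trans_apply]
      rcases le_or_gt (t:ℝ) (1/2 : ℝ) with h | h
      · rw [if_pos (by exact_mod_cast h : (t:ℝ) ≤ (1:ℝ)/2)]
        rw [dif_pos h]
        rw [Path.extend_apply γ ⟨mul_nonneg (by norm_num) t.2.1, by linarith⟩]
      · rw [if_neg (by push_neg; exact h)]
        rw [dif_neg (not_le.mpr h)]
        rw [Path.trans_apply]
        rcases le_or_gt (t:ℝ) (3/4 : ℝ) with h3 | h3
        · have : ¬ ((1:ℝ) - 1/4 ≤ (t:ℝ)) ∨ (t:ℝ) = 3/4 := by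
            rcases lt_or_eq_of_le h3 with h4 | h4
            · left; push_neg; linarith
            · right; exact h4
          have hin : (2*(t:ℝ) - 1 ≤ (1:ℝ)/2) := by linarith
          rw [dif_pos hin]
          simp only [Path.refl_apply]
          rcases this with h4 | h4
          · rw [if_neg (by simpa using h4)]
            exact hH1 _
          · rw [if_pos (by rw [h4]; norm_num)]
            rw [show (4:ℝ) - 4*(t:ℝ) = 1 by rw [h4]; ring]
            exact γ.extend_one
        · rw [if_pos (by linarith : (1:ℝ) - 1/4 ≤ (t:ℝ))]
          rw [dif_neg (by push_neg; linarith : ¬ (2*(t:ℝ) - 1 ≤ (1:ℝ)/2))]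
          rw [Path.symm_apply]
          simp only [Function.comp_apply]
          rw [Path.extend_apply γ (by constructor <;> [linarith [t.2.2]; linarith])]
          congr 1
          ext
          simp only [unitInterval.coe_symm_eq]
          push_cast
          ring
    · -- rel {0, 1}
      intro s t ht
      simp only [Set.mem_insert_iff, Set.mem_singleton_iff] at ht
      simp only [ContinuousMap.HomotopyWith.coe_toContinuousMap, ContinuousMap.coe_mk, hK,
        Path.coe_toContinuousMap]
      rcases ht with rfl | rfl
      · rw [if_pos (by rw [Icc.coe_zero]; exact div_nonneg s.2.1 (by norm_num) :
          ((0:unitInterval):ℝ) ≤ (s:ℝ)/2)]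
        simp only [Icc.coe_zero, mul_zero, Path.extend_zero]
        rw [L.source]
      · have h1 : ¬ ((1:ℝ) ≤ (s:ℝ)/2) := by push_neg; have := s.2.2; linarith
        rw [if_neg (by simpa using h1)]
        rw [if_pos (by rw [Icc.coe_one]; have := s.2.1; linarith :
          (1:ℝ) - (s:ℝ)/4 ≤ ((1:unitInterval):ℝ))]
        simp only [Icc.coe_one]
        rw [show (4:ℝ) - 4*1 = 0 by ring, Path.extend_zero, L.target]
  -- now conclude
  have h2 : ((Path.refl z₀).trans γ.symm).Homotopic γ.symm := ⟨Path.Homotopy.reflTrans γ.symm⟩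
  have h3 : (γ.trans ((Path.refl z₀).trans γ.symm)).Homotopic (γ.trans γ.symm) :=
    Path.Homotopic.hcomp (Path.Homotopic.refl γ) h2
  have h4 : (γ.trans γ.symm).Homotopic (Path.refl y) := ⟨(Path.Homotopy.reflTransSymm γ).symm⟩
  exact key.trans (h3.trans h4)

end Aux4

noncomputable section Aux5

variable {X : Type*} [TopologicalSpace X]

/-- a path as an arrow in the fundamental groupoid -/
def hq {a b : X} (P : Path a b) :
    FundamentalGroupoid.mk a ⟶ FundamentalGroupoid.mk b := ⟦P⟧

lemma hq_trans {a b c : X} (P : Path a b) (Q : Path b c) :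
    hq (P.trans Q) = hq P ≫ hq Q :=
  rfl

lemma hq_symm {a b : X} (P : Path a b) :
    hq P.symm = Groupoid.inv (hq P) := rfl

lemma hq_eq_of_homotopic {a b : X} {P Q : Path a b} (h : P.Homotopic Q) : hq P = hq Q :=
  Quotient.sound h

lemma hq_refl (a : X) : hq (Path.refl a) = 𝟙 (FundamentalGroupoid.mk a) := rfl

lemma hq_eq_of_square {a b : X} (P Q : Path a b)
    (h : hq (P.trans Q.symm) = 𝟙 (FundamentalGroupoid.mk a)) : hq P = hq Q := by
  rw [hq_trans, hq_symm] at h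
  calc hq P = hq P ≫ Groupoid.inv (hq Q) ≫ hq Q := by
        rw [Groupoid.inv_comp, Category.comp_id]
  _ = (hq P ≫ Groupoid.inv (hq Q)) ≫ hq Q := by rw [Category.assoc]
  _ = 𝟙 _ ≫ hq Q := by rw [h]
  _ = hq Q := Category.id_comp _

lemma trans_comp_reparam {a b c : X} {γ : C(unitInterval, X)} {w₁ w₂ w₃ : unitInterval}
    (P : Path a b) (Q : Path b c) (ρP : Path w₁ w₂) (ρQ : Path w₂ w₃)
    (hP : ∀ t, P t = γ (ρP t)) (hQ : ∀ t, Q t = γ (ρQ t)) :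
    ∀ t, (P.trans Q) t = γ ((ρP.trans ρQ) t) := by
  intro t
  rw [Path.trans_apply, Path.trans_apply]
  split_ifs with h
  · exact hP _
  · exact hQ _

end Aux5

noncomputable section MainAux

variable {X : Type*} [MetricSpace X]

/-- restriction of a path to a subinterval, as a path -/
def restr {a b : X} (γ : Path a b) (u v : unitInterval) : Path (γ u) (γ v) :=
  (seg u v).map γ.continuous

lemma restr_apply {a b : X} (γ : Path a b) (u v t : unitInterval) :
    restr γ u v t = γ (seg u v t) := rfl

/-- initial segment of a loop, with source cast to the basepoint -/
def capA {x : X} (c' : Path x x) (w : unitInterval) : Path x (c' w) :=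
  (restr c' 0 w).cast c'.source.symm rfl

/-- final segment of a loop, with target cast to the basepoint -/
def capB {x : X} (c'' : Path x x) (w : unitInterval) : Path (c'' w) x :=
  (restr c'' w 1).cast rfl c''.target.symm

lemma capA_apply {x : X} (c' : Path x x) (w t : unitInterval) :
    capA c' w t = c' (seg 0 w t) := by
  simp only [capA]
  rw [show ⇑((restr c' 0 w).cast c'.source.symm rfl) = ⇑(restr c' 0 w) from
    Path.cast_coe _ _ _]
  rfl

lemma capB_apply {x : X} (c'' : Path x x) (w t : unitInterval) :
    capB c'' w t = c'' (seg w 1 t) := by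
  simp only [capB]
  rw [show ⇑((restr c'' w 1).cast rfl c''.target.symm) = ⇑(restr c'' w 1) from
    Path.cast_coe _ _ _]
  rfl

lemma smallLoop {δ₀ : ℝ}
    (hcontract : ∀ c : C(unitInterval, X), c 0 = c 1 →
      (∃ z : X, Set.range c ⊆ Metric.ball z (δ₀ / 30)) → NullHomotopicLoop c)
    {y z : X} (L : Path y y) (hball : ∀ t, L t ∈ Metric.ball z (δ₀/30)) :
    hq L = 𝟙 (FundamentalGroupoid.mk y) := by
  have h0 : L.toContinuousMap 0 = L.toContinuousMap 1 := by
    show L 0 = L 1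
    rw [L.source, L.target]
  have hrange : Set.range L.toContinuousMap ⊆ Metric.ball z (δ₀/30) := by
    rintro _ ⟨t, rfl⟩; exact hball t
  have hhom := nullHomotopic_based L (hcontract _ h0 ⟨z, hrange⟩)
  rw [← hq_refl y]
  exact hq_eq_of_homotopic hhom

/-- Lemma A: uniformly close loops based at the same point are homotopic,
in a space whose small loops are contractible. -/
lemma lemA (hX : IsGeodesicSpace X) {δ₀ : ℝ} (hδ₀ : 0 < δ₀)
    (hcontract : ∀ c : C(unitInterval, X), c 0 = c 1 →
      (∃ z : X, Set.range c ⊆ Metric.ball z (δ₀ / 30)) → NullHomotopicLoop c)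
    {x : X} (c' c'' : Path x x) {D : ℝ} (hD : D ≤ δ₀/50)
    (hclose : ∀ t, dist (c' t) (c'' t) ≤ D) :
    Path.Homotopic c' c'' := by
  have hε₁ : (0:ℝ) < δ₀/150 := by positivity
  obtain ⟨n1, hn11, hosc1⟩ := unifMod c'.toContinuousMap hε₁
  obtain ⟨n2, hn21, hosc2⟩ := unifMod c''.toContinuousMap hε₁
  set n := max n1 n2 with hndef
  have hn : 1 ≤ n := le_trans hn11 (le_max_left _ _)
  have hn' : (0:ℝ) < n := by exact_mod_cast hn
  have hosc' : ∀ s t : unitInterval, |(s:ℝ)-(t:ℝ)| ≤ 1/n → dist (c' s) (c' t) ≤ δ₀/150 := by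
    intro s t h
    apply hosc1
    refine h.trans (one_div_le_one_div_of_le (by exact_mod_cast hn11) ?_)
    exact_mod_cast le_max_left n1 n2
  have hosc'' : ∀ s t : unitInterval, |(s:ℝ)-(t:ℝ)| ≤ 1/n → dist (c'' s) (c'' t) ≤ δ₀/150 := by
    intro s t h
    apply hosc2
    refine h.trans (one_div_le_one_div_of_le (by exact_mod_cast hn21) ?_)
    exact_mod_cast le_max_right n1 n2
  have hD0 : (0:ℝ) ≤ D := le_trans dist_nonneg (hclose 0)
  choose α hα using fun w => geodPath hX (c' w) (c'' w)
  have hαD : ∀ w s, dist (α w s) (c' w) ≤ D := fun w s => (hα w s).trans (hclose w)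
  have hα0 : ∀ s, α 0 s = x := by
    intro s
    have e : dist (c' 0) (c'' 0) = 0 := by rw [c'.source, c''.source, dist_self]
    have h2 := (hα 0 s).trans (le_of_eq e)
    have h3 : α 0 s = c' 0 := by rwa [← dist_le_zero]
    rw [h3, c'.source]
  have hα1 : ∀ s, α 1 s = x := by
    intro s
    have e : dist (c' 1) (c'' 1) = 0 := by rw [c'.target, c''.target, dist_self]
    have h2 := (hα 1 s).trans (le_of_eq e)
    have h3 : α 1 s = c' 1 := by rwa [← dist_le_zero]
    rw [h3, c'.target]
  set pt : ℕ → unitInterval := fun i => Set.projIcc 0 1 zero_le_one ((i:ℝ)/n) with hpt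
  have ptcoe : ∀ j : ℕ, j ≤ n → (pt j : ℝ) = (j:ℝ)/n := by
    intro j hj
    rw [hpt]
    simp only
    rw [Set.projIcc_of_mem]
    constructor
    · positivity
    · rw [div_le_one hn']; exact_mod_cast hj
  have pt0 : pt 0 = 0 := by
    ext; rw [ptcoe 0 (by omega)]; simp
  have ptn : pt n = 1 := by
    ext; rw [ptcoe n le_rfl, div_self (ne_of_gt hn')]; simp
  -- the interpolating loops
  set L : unitInterval → Path x x :=
    fun w => (capA c' w).trans ((α w).trans (capB c'' w)) with hL
  -- the inductive step
  have step : ∀ k : ℕ, k + 1 ≤ n → hq (L (pt k)) = hq (L (pt (k+1))) := by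
    intro k hk
    set u := pt k with hu
    set v := pt (k+1) with hv
    have hvu : |(v:ℝ) - (u:ℝ)| ≤ 1/n := by
      rw [hu, hv, ptcoe k (by omega), ptcoe (k+1) hk]
      push_cast
      rw [div_sub_div_same, show ((k:ℝ)+1) - k = 1 by ring]
      rw [abs_of_nonneg (by positivity)]
    have osc1 : ∀ t, dist (c' (seg u v t)) (c' u) ≤ δ₀/150 :=
      fun t => hosc' _ _ ((seg_dist u v t).trans hvu)
    have osc2 : ∀ t, dist (c'' (seg u v t)) (c'' u) ≤ δ₀/150 :=
      fun t => hosc'' _ _ ((seg_dist u v t).trans hvu)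
    have oscv : dist (c' v) (c' u) ≤ δ₀/150 := hosc' v u hvu
    -- the small square loop
    set m' : Path (c' u) (c' v) := restr c' u v with hm'
    set m'' : Path (c'' u) (c'' v) := restr c'' u v with hm''
    set S : Path (c' u) (c' u) := ((α u).trans m'').trans ((m'.trans (α v)).symm) with hS
    have hball : ∀ t, S t ∈ Metric.ball (c' u) (δ₀/30) := by
      have hsub : Set.range S ⊆ Metric.ball (c' u) (δ₀/30) := by
        rw [hS, Path.trans_range, Path.symm_range, Path.trans_range, Path.trans_range]
        apply Set.union_subset
        · apply Set.union_subset
          · rintro _ ⟨s, rfl⟩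
            rw [Metric.mem_ball]
            calc dist (α u s) (c' u) ≤ D := hαD u s
            _ < δ₀/30 := by linarith
          · rintro _ ⟨s, rfl⟩
            rw [Metric.mem_ball, hm'', restr_apply]
            calc dist (c'' (seg u v s)) (c' u)
                ≤ dist (c'' (seg u v s)) (c'' u) + dist (c'' u) (c' u) := dist_triangle _ _ _
            _ ≤ δ₀/150 + D := by
                apply add_le_add (osc2 s)
                rw [dist_comm]; exact hclose u
            _ < δ₀/30 := by linarith
        · apply Set.union_subset
          · rintro _ ⟨s, rfl⟩
            rw [Metric.mem_ball, hm', restr_apply]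
            calc dist (c' (seg u v s)) (c' u) ≤ δ₀/150 := osc1 s
            _ < δ₀/30 := by linarith
          · rintro _ ⟨s, rfl⟩
            rw [Metric.mem_ball]
            calc dist (α v s) (c' u) ≤ dist (α v s) (c' v) + dist (c' v) (c' u) :=
              dist_triangle _ _ _
            _ ≤ D + δ₀/150 := add_le_add (hαD v s) oscv
            _ < δ₀/30 := by linarith
      exact fun t => hsub ⟨t, rfl⟩
    have hSid := smallLoop hcontract S hball
    have hsq : hq (α u) ≫ hq m'' = hq m' ≫ hq (α v) := by
      have h2 := hq_eq_of_square ((α u).trans m'') (m'.trans (α v)) hSid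
      rwa [hq_trans, hq_trans] at h2
    -- the reparametrization facts
    have F2a : (capA c' v).Homotopic ((capA c' u).trans m') := by
      apply homotopic_of_reparam c'.toContinuousMap _ _ (seg 0 v).toContinuousMap
        ((seg 0 u).trans (seg u v)).toContinuousMap
      · intro t; exact capA_apply c' v t
      · intro t
        exact trans_comp_reparam (γ := c'.toContinuousMap) (capA c' u) m' (seg 0 u) (seg u v)
          (fun s => capA_apply c' u s) (fun s => restr_apply c' u v s) t
      · show (seg 0 v) 0 = ((seg 0 u).trans (seg u v)) 0
        rw [Path.source, Path.source]
      · show (seg 0 v) 1 = ((seg 0 u).trans (seg u v)) 1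
        rw [Path.target, Path.target]
    have F2b : (capB c'' u).Homotopic (m''.trans (capB c'' v)) := by
      apply homotopic_of_reparam c''.toContinuousMap _ _ (seg u 1).toContinuousMap
        ((seg u v).trans (seg v 1)).toContinuousMap
      · intro t; exact capB_apply c'' u t
      · intro t
        exact trans_comp_reparam (γ := c''.toContinuousMap) m'' (capB c'' v) (seg u v) (seg v 1)
          (fun s => restr_apply c'' u v s) (fun s => capB_apply c'' v s) t
      · show (seg u 1) 0 = ((seg u v).trans (seg v 1)) 0
        rw [Path.source, Path.source]
      · show (seg u 1) 1 = ((seg u v).trans (seg v 1)) 1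
        rw [Path.target, Path.target]
    -- the algebra
    show hq ((capA c' u).trans ((α u).trans (capB c'' u)))
      = hq ((capA c' v).trans ((α v).trans (capB c'' v)))
    simp only [hq_trans]
    rw [hq_eq_of_homotopic F2a, hq_eq_of_homotopic F2b]
    simp only [hq_trans, Category.assoc]
    rw [← Category.assoc (hq (α u)), hsq, Category.assoc]
  -- base identifications
  have base0 : c''.Homotopic (L (pt 0)) := by
    rw [pt0]
    apply homotopic_of_reparam c''.toContinuousMap _ _ (seg 0 1).toContinuousMap
      ((seg 0 0).trans ((seg 0 0).trans (seg 0 1))).toContinuousMap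
    · intro t
      show c'' t = c'' (seg 0 1 t)
      rw [seg_zero_one]
    · intro t
      apply trans_comp_reparam (γ := c''.toContinuousMap) (capA c' 0)
        ((α 0).trans (capB c'' 0)) (seg 0 0) ((seg 0 0).trans (seg 0 1))
      · intro s
        show capA c' 0 s = c'' (seg 0 0 s)
        rw [capA_apply, seg_self, c'.source, c''.source]
      · intro s
        apply trans_comp_reparam (γ := c''.toContinuousMap) (α 0) (capB c'' 0)
          (seg 0 0) (seg 0 1)
        · intro r
          show α 0 r = c'' (seg 0 0 r)
          rw [hα0 r, seg_self, c''.source]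
        · intro r
          exact capB_apply c'' 0 r
    · show (seg 0 1) 0 = ((seg 0 0).trans ((seg 0 0).trans (seg 0 1))) 0
      rw [Path.source, Path.source]
    · show (seg 0 1) 1 = ((seg 0 0).trans ((seg 0 0).trans (seg 0 1))) 1
      rw [Path.target, Path.target]
  have base1 : c'.Homotopic (L (pt n)) := by
    rw [ptn]
    apply homotopic_of_reparam c'.toContinuousMap _ _ (seg 0 1).toContinuousMap
      ((seg 0 1).trans ((seg 1 1).trans (seg 1 1))).toContinuousMap
    · intro t
      show c' t = c' (seg 0 1 t)
      rw [seg_zero_one]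
    · intro t
      apply trans_comp_reparam (γ := c'.toContinuousMap) (capA c' 1)
        ((α 1).trans (capB c'' 1)) (seg 0 1) ((seg 1 1).trans (seg 1 1))
      · intro s
        exact capA_apply c' 1 s
      · intro s
        apply trans_comp_reparam (γ := c'.toContinuousMap) (α 1) (capB c'' 1)
          (seg 1 1) (seg 1 1)
        · intro r
          show α 1 r = c' (seg 1 1 r)
          rw [hα1 r, seg_self, c'.target]
        · intro r
          show capB c'' 1 r = c' (seg 1 1 r)
          rw [capB_apply, seg_self, c'.target, c''.target]
    · show (seg 0 1) 0 = ((seg 0 1).trans ((seg 1 1).trans (seg 1 1))) 0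
      rw [Path.source, Path.source]
    · show (seg 0 1) 1 = ((seg 0 1).trans ((seg 1 1).trans (seg 1 1))) 1
      rw [Path.target, Path.target]
  have ind : ∀ k : ℕ, k ≤ n → hq (L (pt 0)) = hq (L (pt k)) := by
    intro k
    induction k with
    | zero => intro _; rfl
    | succ k ih => intro hk; exact (ih (by omega)).trans (step k hk)
  have final : hq c' = hq c'' := by
    calc hq c' = hq (L (pt n)) := hq_eq_of_homotopic base1
    _ = hq (L (pt 0)) := (ind n le_rfl).symm
    _ = hq c'' := (hq_eq_of_homotopic base0).symm
  exact Quotient.exact final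

end MainAux


section LoopClassAux

open CategoryTheory

variable {Z : Type*} [TopologicalSpace Z] {z : Z}

lemma loopClass_eq_of_homotopic {a b : Path z z} (h : a.Homotopic b) :
    loopClass a = loopClass b := by
  unfold loopClass
  rw [Quotient.sound h]

lemma loopClass_hom (c : Path z z) :
    (loopClass c : Path.Homotopic.Quotient z z) = (⟦c⟧ : Path.Homotopic.Quotient z z) := rfl

lemma loopClass_trans (a b : Path z z) :
    loopClass (b.trans a) = loopClass a * loopClass b := by
  exact hq_trans b a

lemma loopClass_surj : ∀ a : FundamentalGroup Z z, ∃ c : Path z z, loopClass c = a := by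
  intro a
  obtain ⟨c, hc⟩ := Quotient.exists_rep (FundamentalGroup.toPath a)
  refine ⟨c, ?_⟩
  exact hc

end LoopClassAux

theorem forward_hom_exists_unique_surjective {X M : Type*} [MetricSpace X] [MetricSpace M]
    (hX : IsGeodesicSpace X) (hM : IsGeodesicSpace M)
    (x : X) (p : M) (δ₀ η : ℝ) (hδ₀ : 0 < δ₀) (hη : 0 < η) (hηδ : η ≤ δ₀ / 2100)
    (g : M → X) (f : X → M) (hg : DistortionLE g η) (hf : DistortionLE f η)
    (hgp : g p = x) (hfx : f x = p)
    (hgf : ∀ z : X, dist (g (f z)) z ≤ η)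
    (hcontract : ∀ c : C(unitInterval, X), c 0 = c 1 →
      (∃ z : X, Set.range c ⊆ Metric.ball z (δ₀ / 30)) → NullHomotopicLoop c) :
    (∃! Φ : FundamentalGroup M p →* FundamentalGroup X x,
        ∀ (c : Path p p) (c' : Path x x),
          (∀ t : unitInterval, dist (c' t) (g (c t)) ≤ δ₀ / 300) →
          Φ (loopClass c) = loopClass c') ∧
    (∀ Φ : FundamentalGroup M p →* FundamentalGroup X x,
        (∀ (c : Path p p) (c' : Path x x),
          (∀ t : unitInterval, dist (c' t) (g (c t)) ≤ δ₀ / 300) →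
          Φ (loopClass c) = loopClass c') →
        Function.Surjective Φ) := by
  have hgLip : ∀ a b : M, dist (g a) (g b) ≤ dist a b + η := by
    intro a b
    have := hg a b
    rw [abs_le] at this
    linarith [this.2]
  have hfLip : ∀ a b : X, dist (f a) (f b) ≤ dist a b + η := by
    intro a b
    have := hf a b
    rw [abs_le] at this
    linarith [this.2]
  -- canonical approximations
  have approx_ex : ∀ c : Path p p, ∃ c' : Path x x,
      ∀ t, dist (c' t) (g (c t)) ≤ δ₀/525 := by
    intro c
    obtain ⟨w', hw'⟩ := lemB hX g η hgLip c (ε' := δ₀/2100) (by positivity)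
    refine ⟨w'.cast hgp.symm hgp.symm, ?_⟩
    intro t
    have hcast : (w'.cast hgp.symm hgp.symm) t = w' t := by
      rw [show ⇑(w'.cast hgp.symm hgp.symm) = ⇑w' from Path.cast_coe _ _ _]
    rw [hcast]
    calc dist (w' t) (g (c t)) ≤ 2*(δ₀/2100) + 2*η := hw' t
    _ ≤ δ₀/525 := by linarith
  choose app happ using approx_ex
  -- key comparison facts
  have happ2 : ∀ (e : Path p p) (e' : Path x x),
      (∀ t, dist (e' t) (g (e t)) ≤ δ₀/300) → loopClass (app e) = loopClass e' := by
    intro e e' h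
    apply loopClass_eq_of_homotopic
    refine lemA hX hδ₀ hcontract _ _ (D := δ₀/525 + δ₀/300) (by linarith) (fun t => ?_)
    calc dist ((app e) t) (e' t)
        ≤ dist ((app e) t) (g (e t)) + dist (g (e t)) (e' t) := dist_triangle _ _ _
    _ ≤ δ₀/525 + δ₀/300 := by
        apply add_le_add (happ e t)
        rw [dist_comm]; exact h t
  have hnear : ∀ (e₁ e₂ : Path p p), (∀ t, dist (e₁ t) (e₂ t) ≤ δ₀/2100) →
      loopClass (app e₁) = loopClass (app e₂) := by
    intro e₁ e₂ h
    apply loopClass_eq_of_homotopic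
    refine lemA hX hδ₀ hcontract _ _ (D := δ₀/525 + (δ₀/2100 + η) + δ₀/525)
      (by linarith) (fun t => ?_)
    calc dist ((app e₁) t) ((app e₂) t)
        ≤ dist ((app e₁) t) (g (e₁ t)) + dist (g (e₁ t)) (g (e₂ t))
          + dist (g (e₂ t)) ((app e₂) t) := dist_triangle4 _ _ _ _
    _ ≤ δ₀/525 + (δ₀/2100 + η) + δ₀/525 := by
        refine add_le_add (add_le_add (happ e₁ t) ?_) ?_
        · calc dist (g (e₁ t)) (g (e₂ t)) ≤ dist (e₁ t) (e₂ t) + η := hgLip _ _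
          _ ≤ δ₀/2100 + η := by linarith [h t]
        · rw [dist_comm]; exact happ e₂ t
  -- well-definedness of the induced map
  have wd : ∀ c d : Path p p, Path.Homotopic c d →
      loopClass (app c) = loopClass (app d) := by
    intro c d hcd
    obtain ⟨F⟩ := hcd
    set Fc : C(unitInterval × unitInterval, M) := F.toHomotopy.toContinuousMap with hFc
    have hFcap : ∀ s t, Fc (s, t) = F (s, t) := fun s t => rfl
    obtain ⟨n, hn1, hosc⟩ := unifMod2 Fc (ε := δ₀/2100) (by positivity)
    have hn' : (0:ℝ) < n := by exact_mod_cast hn1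
    set pt : ℕ → unitInterval := fun i => Set.projIcc 0 1 zero_le_one ((i:ℝ)/n) with hpt
    have ptcoe : ∀ j : ℕ, j ≤ n → (pt j : ℝ) = (j:ℝ)/n := by
      intro j hj
      rw [hpt]
      simp only
      rw [Set.projIcc_of_mem]
      constructor
      · positivity
      · rw [div_le_one hn']; exact_mod_cast hj
    have pt0 : pt 0 = 0 := by ext; rw [ptcoe 0 (by omega)]; simp
    have ptn : pt n = 1 := by
      ext; rw [ptcoe n le_rfl, div_self (ne_of_gt hn')]; simp
    set cols : ℕ → Path p p := fun k =>
      ⟨⟨fun t => F (pt k, t), (F.toHomotopy.continuous).comp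
          (Continuous.prodMk continuous_const continuous_id)⟩,
        F.source (pt k), F.target (pt k)⟩ with hcols
    have hcolsap : ∀ k t, (cols k) t = F (pt k, t) := fun k t => rfl
    have hchain : ∀ k : ℕ, k + 1 ≤ n →
        loopClass (app (cols k)) = loopClass (app (cols (k+1))) := by
      intro k hk
      apply hnear
      intro t
      rw [hcolsap, hcolsap, ← hFcap, ← hFcap]
      apply hosc
      · rw [ptcoe k (by omega), ptcoe (k+1) hk]
        push_cast
        rw [abs_sub_comm, show ((k:ℝ)+1)/n - (k:ℝ)/n = 1/n by ring,
          abs_of_nonneg (by positivity)]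
      · simp
    have hind : ∀ k : ℕ, k ≤ n → loopClass (app (cols 0)) = loopClass (app (cols k)) := by
      intro k
      induction k with
      | zero => intro _; rfl
      | succ k ih => intro hk; exact (ih (by omega)).trans (hchain k hk)
    have hc0 : loopClass (app c) = loopClass (app (cols 0)) := by
      apply hnear
      intro t
      rw [hcolsap, pt0]
      rw [show F (0, t) = c t from F.toHomotopy.apply_zero t]
      simp [dist_self]
      positivity
    have hcn : loopClass (app (cols n)) = loopClass (app d) := by
      apply hnear
      intro t
      rw [hcolsap, ptn]
      rw [show F (1, t) = d t from F.toHomotopy.apply_one t]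
      simp [dist_self]
      positivity
    exact hc0.trans ((hind n le_rfl).trans hcn)
  -- the homomorphism as a function
  set φfun : Path p p → FundamentalGroup X x := fun c => loopClass (app c) with hφfun
  set Φ₀ : FundamentalGroup M p → FundamentalGroup X x :=
    fun a => Quotient.lift φfun wd (FundamentalGroup.toPath a) with hΦ₀
  have hkey : ∀ c : Path p p, Φ₀ (loopClass c) = loopClass (app c) := fun c => rfl
  have hmul : ∀ u v : FundamentalGroup M p, Φ₀ (u * v) = Φ₀ u * Φ₀ v := by
    intro u v
    obtain ⟨c₁, rfl⟩ := loopClass_surj u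
    obtain ⟨c₂, rfl⟩ := loopClass_surj v
    rw [← loopClass_trans c₁ c₂, hkey, hkey, hkey]
    have htr : loopClass (app (c₂.trans c₁)) = loopClass ((app c₂).trans (app c₁)) := by
      apply happ2
      intro t
      rw [Path.trans_apply, Path.trans_apply]
      split_ifs with h
      · calc dist ((app c₂) _) (g (c₂ _)) ≤ δ₀/525 := happ c₂ _
        _ ≤ δ₀/300 := by linarith
      · calc dist ((app c₁) _) (g (c₁ _)) ≤ δ₀/525 := happ c₁ _
        _ ≤ δ₀/300 := by linarith
    rw [htr, loopClass_trans]
  set Φ : FundamentalGroup M p →* FundamentalGroup X x := MonoidHom.mk' Φ₀ hmul with hΦ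
  have hprop : ∀ (c : Path p p) (c' : Path x x),
      (∀ t : unitInterval, dist (c' t) (g (c t)) ≤ δ₀ / 300) →
      Φ (loopClass c) = loopClass c' := by
    intro c c' h
    show Φ₀ (loopClass c) = loopClass c'
    rw [hkey]
    exact (happ2 c c' h)
  constructor
  · refine ⟨Φ, hprop, ?_⟩
    intro Φ' hprop'
    apply MonoidHom.ext
    intro a
    obtain ⟨c, rfl⟩ := loopClass_surj a
    have h1 := hprop' c (app c) (fun t => (happ c t).trans (by linarith))
    have h2 := hprop c (app c) (fun t => (happ c t).trans (by linarith))
    rw [h1, h2]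
  · intro Φ' hprop' b
    obtain ⟨γ', rfl⟩ := loopClass_surj b
    obtain ⟨w', hw'⟩ := lemB hM f η hfLip γ' (ε' := δ₀/2100) (by positivity)
    set c : Path p p := w'.cast hfx.symm hfx.symm with hc
    have hcap : ∀ t, c t = w' t := by
      intro t
      rw [hc, show ⇑(w'.cast hfx.symm hfx.symm) = ⇑w' from Path.cast_coe _ _ _]
    refine ⟨loopClass c, hprop' c γ' ?_⟩
    intro t
    calc dist (γ' t) (g (c t))
        ≤ dist (γ' t) (g (f (γ' t))) + dist (g (f (γ' t))) (g (c t)) := dist_triangle _ _ _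
    _ ≤ η + (dist (f (γ' t)) (c t) + η) := by
        apply add_le_add
        · rw [dist_comm]; exact hgf (γ' t)
        · exact hgLip _ _
    _ ≤ η + ((2*(δ₀/2100) + 2*η) + η) := by
        have := hw' t
        rw [hcap t, dist_comm]
        linarith [hw' t]
    _ ≤ δ₀ / 300 := by linarith
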